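/- Let F = F_{2^m} be a finite field of characteristic 2 and let f : F → F be the map f(T) = T² + T. For α, β ∈ F, the 4-dimensional commutative non-unital associative F-algebras B_{4,1}^α and B_{4,1}^β, with basis a, b, c, d and nonzero products a² = c, ab = ba = c + αd (resp. c + βd), b² = d, are isomorphic if and only if α + β lies in the image of f. The image of f is an F₂-subspace of F of cardinality 2^{m−1}, so there are exactly two isomorphism classes among the algebras B_{4,1}^α, α ∈ F. -/

import Mathlib

/-- The multiplication table of `B_{4,1}^α` on a basis `a = v 0`, `b = v 1`, `c = v 2`,
`d = v 3`: `a² = c`, `ab = ba = c + αd`, `b² = d`, all other products of basis elements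
zero. -/
def IsB41Basis {F A : Type*} [Field F] [NonUnitalRing A] [Module F A]
    (α : F) (v : Module.Basis (Fin 4) F A) : Prop :=
  v 0 * v 0 = v 2 ∧ v 0 * v 1 = v 2 + α • v 3 ∧ v 1 * v 0 = v 2 + α • v 3 ∧
  v 1 * v 1 = v 3 ∧
  v 0 * v 2 = 0 ∧ v 0 * v 3 = 0 ∧ v 1 * v 2 = 0 ∧ v 1 * v 3 = 0 ∧
  v 2 * v 0 = 0 ∧ v 2 * v 1 = 0 ∧ v 2 * v 2 = 0 ∧ v 2 * v 3 = 0 ∧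
  v 3 * v 0 = 0 ∧ v 3 * v 1 = 0 ∧ v 3 * v 2 = 0 ∧ v 3 * v 3 = 0

set_option maxHeartbeats 4000000 in
/-- Over a finite field `F = F_{2^m}` of characteristic 2, with `f(T) = T² + T`:
the algebras `B_{4,1}^α` and `B_{4,1}^β` are isomorphic iff `α + β ∈ im f`;
moreover `im f` is an `F₂`-subspace of `F` of cardinality `2^{m-1}` (i.e. of index 2),
so there are exactly two isomorphism classes among the `B_{4,1}^α`, `α ∈ F`. -/
theorem stmt17 {F : Type} [Field F] [Fintype F] (hchar : ringChar F = 2)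
    {A B : Type*}
    [NonUnitalRing A] [Module F A] [SMulCommClass F A A] [IsScalarTower F A A]
    [NonUnitalRing B] [Module F B] [SMulCommClass F B B] [IsScalarTower F B B]
    (α β : F)
    (v : Module.Basis (Fin 4) F A) (w : Module.Basis (Fin 4) F B)
    (hv : IsB41Basis α v) (hw : IsB41Basis β w) :
    ((∃ e : A ≃ₗ[F] B, ∀ x y : A, e (x * y) = e x * e y) ↔
        α + β ∈ Set.range (fun T : F => T ^ 2 + T)) ∧
    (0 : F) ∈ Set.range (fun T : F => T ^ 2 + T) ∧
    (∀ x ∈ Set.range (fun T : F => T ^ 2 + T), ∀ y ∈ Set.range (fun T : F => T ^ 2 + T),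
        x + y ∈ Set.range (fun T : F => T ^ 2 + T)) ∧
    2 * Nat.card (Set.range (fun T : F => T ^ 2 + T)) = Fintype.card F ∧
    Nat.card (Quot (fun x y : F => x + y ∈ Set.range (fun T : F => T ^ 2 + T))) = 2 := by
  have hp : CharP F 2 := hchar ▸ ringChar.charP F
  have htwo : (2 : F) = 0 := by
    have := CharP.cast_eq_zero F 2
    simpa using this
  obtain ⟨hv1, hv2, hv3, hv4, hv5, hv6, hv7, hv8, hv9, hv10, hv11, hv12, hv13, hv14, hv15, hv16⟩ := hv
  obtain ⟨hw1, hw2, hw3, hw4, hw5, hw6, hw7, hw8, hw9, hw10, hw11, hw12, hw13, hw14, hw15, hw16⟩ := hw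
  set f : F → F := fun T => T ^ 2 + T with hf
  have hadd : ∀ a b : F, f (a + b) = f a + f b := by
    intro a b; simp only [hf]; linear_combination (a * b) * htwo
  let φ : F →+ F := AddMonoidHom.mk' f hadd
  have hφ : ∀ t, φ t = t ^ 2 + t := fun t => rfl
  have hrange : Set.range f = (φ.range : Set F) := (AddMonoidHom.coe_range φ).symm
  have hkerset : (φ.ker : Set F) = {0, 1} := by
    ext t
    simp only [SetLike.mem_coe, AddMonoidHom.mem_ker, hφ, Set.mem_insert_iff,
      Set.mem_singleton_iff]
    constructor
    · intro h
      have h' : t * (t + 1) = 0 := by linear_combination h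
      rcases mul_eq_zero.mp h' with h1 | h1
      · exact Or.inl h1
      · exact Or.inr (by linear_combination h1 - htwo)
    · rintro (rfl | rfl)
      · ring
      · linear_combination htwo
  have hker2 : Nat.card φ.ker = 2 := by
    have : Nat.card (φ.ker : Set F) = 2 := by
      rw [hkerset, Nat.card_coe_set_eq, Set.ncard_pair (zero_ne_one)]
    simpa using this
  have hcardF : Nat.card F = Nat.card (F ⧸ φ.ker) * Nat.card φ.ker :=
    AddSubgroup.card_eq_card_quotient_mul_card_addSubgroup φ.ker
  have hquotrange : Nat.card (F ⧸ φ.ker) = Nat.card φ.range :=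
    Nat.card_congr (QuotientAddGroup.quotientKerEquivRange φ).toEquiv
  have hRr : Nat.card (Set.range f) = Nat.card φ.range := by rw [hrange]; rfl
  have hcard : 2 * Nat.card (Set.range f) = Fintype.card F := by
    rw [← Nat.card_eq_fintype_card, hcardF, hquotrange, hker2, hRr]; ring
  have hqpos : 0 < Nat.card φ.range := Nat.card_pos
  have hquot2 : Nat.card (F ⧸ φ.range) = 2 := by
    have h1 : Nat.card F = Nat.card (F ⧸ φ.range) * Nat.card φ.range :=
      AddSubgroup.card_eq_card_quotient_mul_card_addSubgroup φ.range
    have h2 : 2 * Nat.card φ.range = Nat.card F := by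
      rw [← Nat.card_eq_fintype_card] at hcard; rw [← hcard, hRr]
    have h3 : Nat.card (F ⧸ φ.range) * Nat.card φ.range = 2 * Nat.card φ.range := by
      rw [← h1, h2]
    exact Nat.eq_of_mul_eq_mul_right hqpos h3
  have hrel : ∀ x y : F, (x + y ∈ Set.range f) ↔
      (QuotientAddGroup.mk x : F ⧸ φ.range) = QuotientAddGroup.mk y := by
    intro x y
    rw [QuotientAddGroup.eq]
    have hneg : -x = x := by
      have hx : x + x = 0 := by linear_combination x * htwo
      exact neg_eq_of_add_eq_zero_left hx
    rw [hneg, hrange]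
    rfl
  have hbij : Function.Bijective
      (Quot.lift (fun x => (QuotientAddGroup.mk x : F ⧸ φ.range))
        (fun a b hab => (hrel a b).mp hab) :
        Quot (fun x y : F => x + y ∈ Set.range f) → F ⧸ φ.range) := by
    constructor
    · rintro ⟨x⟩ ⟨y⟩ h
      exact Quot.sound ((hrel x y).mpr h)
    · rintro ⟨x⟩
      exact ⟨Quot.mk _ x, rfl⟩
  refine ⟨⟨?_, ?_⟩, ⟨0, by simp only [hf]; ring⟩, ?_, hcard, ?_⟩
  · -- forward direction
    rintro ⟨e, hmul⟩
    set a0 := w.repr (e (v 0)) 0 with ha0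
    set a1 := w.repr (e (v 0)) 1 with ha1
    set b0 := w.repr (e (v 1)) 0 with hb0def
    set b1 := w.repr (e (v 1)) 1 with hb1def
    have he0 : e (v 0) = a0 • w 0 + a1 • w 1 + w.repr (e (v 0)) 2 • w 2
        + w.repr (e (v 0)) 3 • w 3 := by
      have := w.sum_repr (e (v 0)); rw [Fin.sum_univ_four] at this; exact this.symm
    have he1 : e (v 1) = b0 • w 0 + b1 • w 1 + w.repr (e (v 1)) 2 • w 2
        + w.repr (e (v 1)) 3 • w 3 := by
      have := w.sum_repr (e (v 1)); rw [Fin.sum_univ_four] at this; exact this.symm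
    have hprod : ∀ p0 p1 p2 p3 q0 q1 q2 q3 : F,
        (p0 • w 0 + p1 • w 1 + p2 • w 2 + p3 • w 3) * (q0 • w 0 + q1 • w 1 + q2 • w 2 + q3 • w 3)
        = (p0 * q0 + p0 * q1 + p1 * q0) • w 2
          + ((p0 * q1) * β + (p1 * q0) * β + p1 * q1) • w 3 := by
      intro p0 p1 p2 p3 q0 q1 q2 q3
      simp only [mul_add, add_mul, smul_mul_assoc, mul_smul_comm, hw1, hw2, hw3, hw4, hw5,
        hw6, hw7, hw8, hw9, hw10, hw11, hw12, hw13, hw14, hw15, hw16,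
        smul_zero, zero_add, add_zero, smul_add, smul_smul]
      match_scalars <;> ring
    have hA : e (v 2) = (a0 * a0 + a0 * a1 + a1 * a0) • w 2
        + ((a0 * a1) * β + (a1 * a0) * β + a1 * a1) • w 3 := by
      rw [← hv1, hmul, he0, hprod]
    have hB : e (v 3) = (b0 * b0 + b0 * b1 + b1 * b0) • w 2
        + ((b0 * b1) * β + (b1 * b0) * β + b1 * b1) • w 3 := by
      rw [← hv4, hmul, he1, hprod]
    rw [show a0 * a0 + a0 * a1 + a1 * a0 = a0 * a0 from by linear_combination (a0*a1) * htwo,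
      show (a0 * a1) * β + (a1 * a0) * β + a1 * a1 = a1 * a1 from by
        linear_combination (a0*a1*β) * htwo] at hA
    rw [show b0 * b0 + b0 * b1 + b1 * b0 = b0 * b0 from by linear_combination (b0*b1) * htwo,
      show (b0 * b1) * β + (b1 * b0) * β + b1 * b1 = b1 * b1 from by
        linear_combination (b0*b1*β) * htwo] at hB
    have hC : (a0 * b0 + a0 * b1 + a1 * b0) • w 2
        + ((a0 * b1) * β + (a1 * b0) * β + a1 * b1) • w 3
        = ((a0 * a0) • w 2 + (a1 * a1) • w 3) + α • ((b0 * b0) • w 2 + (b1 * b1) • w 3) := by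
      have h := hmul (v 0) (v 1)
      rw [hv2, map_add, map_smul, hA, hB, he0, he1, hprod] at h
      exact h.symm
    have eq1 : a0 * b0 + a0 * b1 + a1 * b0 = a0 * a0 + α * (b0 * b0) := by
      have := congrArg (fun z => w.repr z 2) hC
      simpa [Module.Basis.repr_self, Finsupp.single_apply, smul_eq_mul] using this
    have eq2 : (a0 * b1) * β + (a1 * b0) * β + a1 * b1 = a1 * a1 + α * (b1 * b1) := by
      have := congrArg (fun z => w.repr z 3) hC
      simpa [Module.Basis.repr_self, Finsupp.single_apply, smul_eq_mul] using this
    -- D ≠ 0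
    have hD : a0 * b1 + a1 * b0 ≠ 0 := by
      intro hD0
      have hab : a0 * b1 = a1 * b0 := by linear_combination hD0 - (a1*b0) * htwo
      rcases eq_or_ne b1 0 with hb1 | hb1
      · rcases eq_or_ne b0 0 with hb0 | hb0
        · have hz : e (v 3) = 0 := by rw [hB, hb0, hb1]; simp
          have : v 3 = 0 := by
            apply e.injective; rw [hz, map_zero]
          exact v.ne_zero 3 this
        · have ha1z : a1 = 0 := by
            have h0 : a1 * b0 = 0 := by rw [← hab, hb1]; ring
            exact (mul_eq_zero.mp h0).resolve_right hb0
          have hsm : (b0*b0) • e (v 2) = (a0*a0) • e (v 3) := by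
            rw [hA, hB, ha1z, hb1]
            match_scalars <;> ring
          have h2 : (b0*b0) • v 2 = (a0*a0) • v 3 := by
            apply e.injective; rw [map_smul, map_smul, hsm]
          have := congrArg (fun z => v.repr z 2) h2
          simp [Module.Basis.repr_self, Finsupp.single_apply, smul_eq_mul] at this
          exact hb0 this
      · have hsm : (b1*b1) • e (v 2) = (a1*a1) • e (v 3) := by
          rw [hA, hB]
          match_scalars
          · linear_combination (a0*b1 + a1*b0) * hab
          · ring
        have h2 : (b1*b1) • v 2 = (a1*a1) • v 3 := by
          apply e.injective; rw [map_smul, map_smul, hsm]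
        have := congrArg (fun z => v.repr z 2) h2
        simp [Module.Basis.repr_self, Finsupp.single_apply, smul_eq_mul] at this
        exact hb1 this
    -- key identity
    set D := a0 * b1 + a1 * b0 with hDdef
    set N := a0 * a1 + a1 * b0 + α * (b0 * b1) with hNdef
    have key : N ^ 2 + N * D = (α + β) * D ^ 2 := by
      rw [hNdef, hDdef]
      linear_combination (a1^2 + a1*b1 + α*b1^2) * eq1 + (a0*b1 + a1*b0) * eq2 +
        (b0^2*b1^2*α^2 + 2*a1*b0^2*b1*α - a1^2*b0*b1 + a1^2*b0^2 - a1^2*b0^2*β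
          - a0*a1*b1^2 - 2*a0*a1*b0*b1*β + a0*a1^2*b0 - a0^2*b1^2*β + a0^2*a1*b1
          + a0^2*a1^2) * htwo
    refine ⟨N / D, ?_⟩
    show (N / D) ^ 2 + N / D = α + β
    have harr : (N / D) ^ 2 + N / D = (N ^ 2 + N * D) / D ^ 2 := by
      field_simp
    rw [harr, key, mul_div_assoc, div_self (pow_ne_zero 2 hD), mul_one]
  · -- backward direction
    rintro ⟨t, ht⟩
    have ht : t ^ 2 + t = α + β := ht
    have ht2 : t + t = 0 := by linear_combination t * htwo
    set u : Fin 4 → B := ![w 0 + t • w 1, w 1, w 2 + (t*t) • w 3, w 3] with hu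
    set u' : Fin 4 → A := ![v 0 + t • v 1, v 1, v 2 + (t*t) • v 3, v 3] with hu'
    set fl := v.constr ℕ u with hfl
    set gl := w.constr ℕ u' with hgl
    have hfg : fl.comp gl = LinearMap.id := by
      apply w.ext; intro i
      fin_cases i <;>
        simp [hfl, hgl, hu, hu', Module.Basis.constr_basis, map_add, map_smul] <;>
        match_scalars <;>
        first
          | ring1
          | linear_combination t * htwo
          | linear_combination (-t) * htwo
          | linear_combination (t*t) * htwo
          | linear_combination (-(t*t)) * htwo
          | linear_combination (-(t*β)) * htwo
          | linear_combination (-(t*α)) * htwo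
          | linear_combination ht + (α - t) * htwo
          | linear_combination -ht + (t - α) * htwo
    have hgf : gl.comp fl = LinearMap.id := by
      apply v.ext; intro i
      fin_cases i <;>
        simp [hfl, hgl, hu, hu', Module.Basis.constr_basis, map_add, map_smul] <;>
        match_scalars <;>
        first
          | ring1
          | linear_combination t * htwo
          | linear_combination (-t) * htwo
          | linear_combination (t*t) * htwo
          | linear_combination (-(t*t)) * htwo
          | linear_combination (-(t*β)) * htwo
          | linear_combination (-(t*α)) * htwo
          | linear_combination ht + (α - t) * htwo
          | linear_combination -ht + (t - α) * htwo
    have key : ∀ i j : Fin 4, fl (v i * v j) = fl (v i) * fl (v j) := by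
      intro i j
      fin_cases i <;> fin_cases j <;>
        · simp only [Fin.zero_eta, Fin.mk_one, Fin.reduceFinMk, Fin.isValue, hv1, hv2, hv3, hv4, hv5, hv6, hv7, hv8, hv9, hv10,
            hv11, hv12, hv13, hv14, hv15, hv16, map_add, map_smul, map_zero, hfl,
            Module.Basis.constr_basis, hu, Matrix.cons_val_zero, Matrix.cons_val_one,
            Matrix.head_cons, Matrix.cons_val_two, Matrix.tail_cons, Matrix.cons_val_three,
            mul_add, add_mul, smul_mul_assoc, mul_smul_comm, hw1, hw2, hw3, hw4,
            hw5, hw6, hw7, hw8, hw9, hw10, hw11, hw12, hw13, hw14, hw15, hw16,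
            smul_zero, add_zero, zero_add, smul_add, smul_smul, mul_zero, zero_mul]
          try match_scalars <;>
            first
          | ring1
          | linear_combination t * htwo
          | linear_combination (-t) * htwo
          | linear_combination (t*t) * htwo
          | linear_combination (-(t*t)) * htwo
          | linear_combination (-(t*β)) * htwo
          | linear_combination (-(t*α)) * htwo
          | linear_combination ht + (α - t) * htwo
          | linear_combination -ht + (t - α) * htwo
    have hbil : (LinearMap.mul F A).compr₂ fl = (LinearMap.mul F B).compl₁₂ fl fl := by
      apply v.ext; intro i; apply v.ext; intro j
      simpa using key i j
    refine ⟨LinearEquiv.ofLinear fl gl hfg hgf, fun x y => ?_⟩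
    have := LinearMap.congr_fun (LinearMap.congr_fun hbil x) y
    simpa using this
  · -- closure
    rintro x ⟨s, rfl⟩ y ⟨r, rfl⟩
    exact ⟨s + r, hadd s r⟩
  · rw [Nat.card_eq_of_bijective _ hbij, hquot2]
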